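/- As n → ∞ along the positive integers, ∫_n^∞ t^n e^{−t} dt is asymptotically equivalent to (n^n/e^n)·√(πn/2); that is, the ratio of these two quantities tends to 1. -/

import Mathlib

open Real Filter MeasureTheory Set Topology

lemma log_le_half_sub_inv {y : ℝ} (hy : 1 ≤ y) : Real.log y ≤ (y - 1/y) / 2 := by
  set h : ℝ → ℝ := fun y => (y - 1/y)/2 - Real.log y with hh
  have hd : ∀ z : ℝ, z ≠ 0 → HasDerivAt h ((1 - (-1/z^2))/2 - 1/z) z := by
    intro z hz0
    have h1 : HasDerivAt (fun y : ℝ => y - 1/y) (1 - (-1/z^2)) z := by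
      have := (hasDerivAt_inv hz0)
      have h2 : HasDerivAt (fun y : ℝ => 1/y) (-1/z^2) z := by
        simpa [one_div, neg_div] using this
      exact (hasDerivAt_id' z).sub h2
    have := (h1.div_const 2).sub (Real.hasDerivAt_log hz0)
    rw [one_div z]; exact this
  have key : ∀ z ∈ Set.Ici (1:ℝ), 0 ≤ h z := by
    have hmono : MonotoneOn h (Set.Ici (1:ℝ)) := by
      apply monotoneOn_of_deriv_nonneg (convex_Ici 1)
      · intro z hz
        have hz0 : z ≠ 0 := by have : (1:ℝ) ≤ z := hz; positivity
        exact (hd z hz0).continuousAt.continuousWithinAt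
      · intro z hz
        rw [interior_Ici] at hz
        have hz1 : (1:ℝ) < z := hz
        have hz0 : z ≠ 0 := by linarith
        exact (hd z hz0).differentiableAt.differentiableWithinAt
      · intro z hz
        rw [interior_Ici] at hz
        have hz1 : (1:ℝ) < z := hz
        have hz0 : z ≠ 0 := by linarith
        rw [(hd z hz0).deriv]
        have : (1 - (-1/z^2))/2 - 1/z = (z-1)^2/(2*z^2) := by field_simp; ring
        rw [this]; positivity
    intro z hz
    have := hmono (Set.self_mem_Ici) hz hz
    simpa [hh] using this
  have := key y hy
  simp only [hh] at this
  linarith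

noncomputable def Fop (n : ℕ) (u : ℝ) : ℝ := (1 + u / Real.sqrt n) ^ n * Real.exp (-(Real.sqrt n * u))

lemma Fop_eq_exp {n : ℕ} (hn : 1 ≤ n) {u : ℝ} (hu : 0 ≤ u) :
    Fop n u = Real.exp ((n : ℝ) * Real.log (1 + u / Real.sqrt n) - Real.sqrt n * u) := by
  have hsn : (1:ℝ) ≤ Real.sqrt n := by
    rw [show (1:ℝ) = Real.sqrt 1 by simp]
    exact Real.sqrt_le_sqrt (by exact_mod_cast hn)
  have hx : 0 ≤ u / Real.sqrt n := div_nonneg hu (by linarith)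
  have h1x : (0:ℝ) < 1 + u / Real.sqrt n := by linarith
  unfold Fop
  rw [Real.exp_sub, Real.exp_nat_mul, Real.exp_log h1x, Real.exp_neg, ← div_eq_mul_inv]

lemma Fop_le_bound {n : ℕ} (hn : 1 ≤ n) {u : ℝ} (hu : 0 < u) :
    Fop n u ≤ Real.exp ((1 - u)/4) := by
  have hn0 : (0:ℝ) ≤ (n:ℝ) := Nat.cast_nonneg n
  have hsn : (1:ℝ) ≤ Real.sqrt n := by
    rw [show (1:ℝ) = Real.sqrt 1 by simp]
    exact Real.sqrt_le_sqrt (by exact_mod_cast hn)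
  have hs0 : Real.sqrt n ≠ 0 := by linarith
  have hself : Real.sqrt n * Real.sqrt n = (n:ℝ) := Real.mul_self_sqrt hn0
  obtain ⟨x, hxdef⟩ : ∃ x : ℝ, x = u / Real.sqrt n := ⟨_, rfl⟩
  have hx0 : 0 < x := hxdef ▸ div_pos hu (by linarith)
  have h1x : (0:ℝ) < 1 + x := by linarith
  have hx_le : x ≤ u := hxdef ▸ div_le_self hu.le hsn
  have h1 : x * Real.sqrt n = u := by rw [hxdef]; exact div_mul_cancel₀ u hs0
  have hnx : (n:ℝ) * x = Real.sqrt n * u := by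
    linear_combination (-x) * hself + Real.sqrt n * h1
  have hx2 : (n:ℝ) * x^2 = u^2 := by
    linear_combination (-(x^2)) * hself + (x * Real.sqrt n + u) * h1
  rw [Fop_eq_exp hn hu.le, Real.exp_le_exp, ← hxdef]
  have hlog := log_le_half_sub_inv (show (1:ℝ) ≤ 1 + x by linarith)
  have s1 : (n:ℝ) * Real.log (1+x) ≤ (n:ℝ) * (((1+x) - 1/(1+x))/2) :=
    mul_le_mul_of_nonneg_left hlog hn0
  have e1 : (n:ℝ)*(((1+x) - 1/(1+x))/2) - (n:ℝ)*x = -((n:ℝ)*x^2)/(2*(1+x)) := by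
    field_simp; ring
  have s4 : -(u^2)/(2*(1+x)) ≤ -(u^2)/(2*(1+u)) := by
    rw [neg_div, neg_div, neg_le_neg_iff]
    apply div_le_div_of_nonneg_left (sq_nonneg u) (by linarith) (by linarith)
  have s5 : -(u^2)/(2*(1+u)) ≤ (1-u)/4 := by
    rw [div_le_div_iff₀ (by linarith) (by norm_num)]
    nlinarith [sq_nonneg u]
  have := e1 ▸ (sub_le_sub_right s1 ((n:ℝ)*x))
  rw [hx2] at this
  rw [← hnx]
  linarith

lemma sqrt_nat_tendsto : Tendsto (fun n : ℕ => Real.sqrt n) atTop atTop := by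
  apply tendsto_atTop_atTop_of_monotone
  · intro a b hab
    exact Real.sqrt_le_sqrt (by exact_mod_cast hab)
  · intro b
    rcases le_or_gt b 0 with hb | hb
    · exact ⟨0, hb.trans (Real.sqrt_nonneg _)⟩
    · refine ⟨⌈b^2⌉₊, ?_⟩
      exact le_trans (le_of_eq (Real.sqrt_sq hb.le).symm) (Real.sqrt_le_sqrt (Nat.le_ceil _))

lemma Fop_tendsto {u : ℝ} (hu : 0 < u) :
    Tendsto (fun n : ℕ => Fop n u) atTop (𝓝 (Real.exp (-(u^2/2)))) := by
  have hb : Tendsto (fun n : ℕ => u^3 * (Real.sqrt n - u)⁻¹) atTop (𝓝 0) := by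
    have h1 : Tendsto (fun n : ℕ => Real.sqrt n - u) atTop atTop :=
      tendsto_atTop_add_const_right _ (-u) sqrt_nat_tendsto
    simpa using h1.inv_tendsto_atTop.const_mul (u^3)
  have hexp : Tendsto (fun n : ℕ => (n:ℝ) * Real.log (1 + u / Real.sqrt n) - Real.sqrt n * u)
      atTop (𝓝 (-(u^2/2))) := by
    have h0 : Tendsto (fun n : ℕ =>
        ((n:ℝ) * Real.log (1 + u / Real.sqrt n) - Real.sqrt n * u) - (-(u^2/2))) atTop (𝓝 0) := by
      apply squeeze_zero_norm' _ hb
      filter_upwards [sqrt_nat_tendsto.eventually_gt_atTop u] with n hn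
      have hs0 : (0:ℝ) < Real.sqrt n := lt_trans hu hn
      obtain ⟨s, hsdef⟩ : ∃ s:ℝ, s = Real.sqrt n := ⟨_, rfl⟩
      have hss : s * s = (n:ℝ) := by rw [hsdef]; exact Real.mul_self_sqrt (Nat.cast_nonneg n)
      have hus : u < s := hsdef ▸ hn
      have hs0' : (0:ℝ) < s := hsdef ▸ hs0
      rw [← hsdef]
      have hx0 : 0 < u / s := div_pos hu hs0'
      have hx1 : u / s < 1 := (div_lt_one hs0').mpr hus
      have key := Real.abs_log_sub_add_sum_range_le
        (x := -(u/s)) (by rw [abs_neg, abs_of_pos hx0]; exact hx1) 2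
      have hsum : (∑ i ∈ Finset.range 2, (-(u/s)) ^ (i+1) / ((i:ℝ)+1)) = -(u/s) + (u/s)^2/2 := by
        norm_num [Finset.sum_range_succ]
      rw [hsum, sub_neg_eq_add, abs_neg, abs_of_pos hx0] at key
      have hmul := mul_le_mul_of_nonneg_left key (Nat.cast_nonneg n : (0:ℝ) ≤ (n:ℝ))
      rw [show ((n:ℝ)) * |(-(u/s) + (u/s)^2/2) + Real.log (1 + u/s)|
          = |(n:ℝ) * ((-(u/s) + (u/s)^2/2) + Real.log (1 + u/s))| by
        rw [abs_mul, abs_of_nonneg (Nat.cast_nonneg n : (0:ℝ) ≤ (n:ℝ))]] at hmul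
      have hsu0 : (0:ℝ) < s - u := by linarith
      have h1 : (n:ℝ) * (u/s) = s * u := by rw [← hss]; field_simp
      have h2 : (n:ℝ) * ((u/s)^2/2) = u^2/2 := by rw [← hss]; field_simp
      have e2 : (n:ℝ) * ((-(u/s) + (u/s)^2/2) + Real.log (1 + u/s))
          = ((n:ℝ) * Real.log (1 + u/s) - s * u) - (-(u^2/2)) := by
        calc (n:ℝ) * ((-(u/s) + (u/s)^2/2) + Real.log (1 + u/s))
            = (n:ℝ)*Real.log (1 + u/s) - (n:ℝ)*(u/s) + (n:ℝ)*((u/s)^2/2) := by ring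
          _ = ((n:ℝ) * Real.log (1 + u/s) - s * u) - (-(u^2/2)) := by rw [h1, h2]; ring
      have e3 : (n:ℝ) * ((u/s)^3 / (1 - u/s)) = u^3 * (s - u)⁻¹ := by
        rw [← div_eq_mul_inv]
        rw [← hss]
        have : s - u ≠ 0 := hsu0.ne'
        field_simp
      rw [e2, e3] at hmul
      rw [Real.norm_eq_abs]
      exact hmul
    have h3 := h0.add_const (-(u^2/2))
    rw [zero_add] at h3
    exact h3.congr fun k => by ring
  have hcont : Tendsto (fun n : ℕ =>
      Real.exp ((n:ℝ) * Real.log (1 + u / Real.sqrt n) - Real.sqrt n * u)) atTop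
      (𝓝 (Real.exp (-(u^2/2)))) := (Real.continuous_exp.tendsto _).comp hexp
  apply hcont.congr'
  filter_upwards [eventually_ge_atTop 1] with n hn
  exact (Fop_eq_exp hn hu.le).symm

lemma integral_Ioi_shift (g : ℝ → ℝ) (c : ℝ) :
    ∫ t in Set.Ioi c, g t = ∫ s in Set.Ioi (0:ℝ), g (s + c) := by
  rw [← integral_indicator measurableSet_Ioi, ← integral_indicator measurableSet_Ioi,
    ← integral_add_right_eq_self ((Set.Ioi c).indicator g) c]
  congr 1
  funext s
  simp only [Set.indicator_apply, Set.mem_Ioi, lt_add_iff_pos_left]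

lemma sub_eq (n : ℕ) (hn : 1 ≤ n) :
    ∫ t in Set.Ioi (n:ℝ), t ^ n * Real.exp (-t)
      = ((n:ℝ)^n / Real.exp n) * (Real.sqrt n * ∫ u in Set.Ioi (0:ℝ), Fop n u) := by
  have hn0 : (0:ℝ) < (n:ℝ) := by exact_mod_cast hn
  have hs0 : (0:ℝ) < Real.sqrt n := Real.sqrt_pos.mpr hn0
  have hns : (n:ℝ) / Real.sqrt n = Real.sqrt n := Real.div_sqrt
  rw [integral_Ioi_shift (fun t => t ^ n * Real.exp (-t)) (n:ℝ)]
  have hscale := integral_comp_mul_left_Ioi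
    (fun s => ((s + n)^n * Real.exp (-(s + n)))) 0 hs0
  rw [mul_zero] at hscale
  have hstep : ∫ s in Set.Ioi (0:ℝ), ((s + n)^n * Real.exp (-(s + n)))
      = Real.sqrt n * ∫ u in Set.Ioi (0:ℝ),
          ((Real.sqrt n * u + n)^n * Real.exp (-(Real.sqrt n * u + n))) := by
    rw [hscale, smul_eq_mul, ← mul_assoc, mul_inv_cancel₀ hs0.ne', one_mul]
  simp only [hstep]
  have key : ∀ u:ℝ, (n:ℝ) * (1 + u/Real.sqrt n) = Real.sqrt n * u + n := by
    intro u
    have h : (n:ℝ) * (u / Real.sqrt n) = Real.sqrt n * u := by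
      rw [mul_comm, div_mul_eq_mul_div, mul_div_assoc, hns, mul_comm]
    rw [mul_add, mul_one, h]; ring
  have hcong : ∫ u in Set.Ioi (0:ℝ),
      ((Real.sqrt n * u + n)^n * Real.exp (-(Real.sqrt n * u + n)))
      = ∫ u in Set.Ioi (0:ℝ), ((n:ℝ)^n / Real.exp n) * Fop n u := by
    apply setIntegral_congr_fun measurableSet_Ioi
    intro u _
    simp only [Fop]
    rw [neg_add, Real.exp_add, ← key u, mul_pow, Real.exp_neg (n:ℝ), div_eq_mul_inv]
    ring
  rw [hcong, integral_const_mul]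
  ring

lemma bound_integrable : IntegrableOn (fun u => Real.exp ((1-u)/4)) (Set.Ioi (0:ℝ)) := by
  have h := exp_neg_integrableOn_Ioi 0 (show (0:ℝ) < 1/4 by norm_num)
  refine IntegrableOn.congr_fun (h.const_mul (Real.exp (1/4))) ?_ measurableSet_Ioi
  intro x _
  simp only [← Real.exp_add]
  congr 1
  ring

lemma int_tendsto :
    Tendsto (fun n : ℕ => ∫ u in Set.Ioi (0:ℝ), Fop n u) atTop (𝓝 (Real.sqrt (π/2))) := by
  have hlim : ∫ u in Set.Ioi (0:ℝ), Real.exp (-(u^2/2)) = Real.sqrt (π/2) := by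
    have hg := integral_gaussian_Ioi (1/2)
    have hfun : (fun u : ℝ => Real.exp (-(u^2/2))) = fun u : ℝ => Real.exp (-(1/2) * u^2) := by
      funext u; ring_nf
    rw [hfun, hg]
    have h4 : Real.sqrt (π/(1/2)) = Real.sqrt (π/2) * 2 := by
      rw [show π/(1/2) = (π/2)*4 by ring, Real.sqrt_mul (by positivity) 4,
        show Real.sqrt 4 = 2 by
          rw [show (4:ℝ) = 2^2 by norm_num, Real.sqrt_sq (by norm_num : (0:ℝ) ≤ 2)]]
    rw [h4]; ring
  rw [← hlim]
  apply tendsto_integral_filter_of_dominated_convergence (fun u => Real.exp ((1-u)/4))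
  · apply Eventually.of_forall
    intro n
    apply Continuous.aestronglyMeasurable
    apply Continuous.mul
    · exact (continuous_const.add (continuous_id.div_const _)).pow n
    · exact Real.continuous_exp.comp (continuous_const.mul continuous_id).neg
  · filter_upwards [eventually_ge_atTop 1] with n hn
    filter_upwards [ae_restrict_mem measurableSet_Ioi] with u hu
    have hu0 : (0:ℝ) < u := hu
    have h1x : (0:ℝ) ≤ 1 + u / Real.sqrt n := by
      have := div_nonneg hu0.le (Real.sqrt_nonneg (n:ℝ))
      linarith
    have hFpos : 0 ≤ Fop n u := by
      unfold Fop; exact mul_nonneg (pow_nonneg h1x n) (Real.exp_nonneg _)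
    rw [Real.norm_eq_abs, abs_of_nonneg hFpos]
    exact Fop_le_bound hn hu0
  · exact bound_integrable
  · filter_upwards [ae_restrict_mem measurableSet_Ioi] with u hu
    exact Fop_tendsto hu

theorem gamma_tail_integral_asymptotics :
    Tendsto (fun n : ℕ =>
        (∫ t in Set.Ioi (n : ℝ), t ^ n * Real.exp (-t)) /
          ((n : ℝ) ^ n / Real.exp n * Real.sqrt (π * n / 2)))
      atTop (nhds 1) := by
  have hpi : (0:ℝ) < Real.sqrt (π/2) := Real.sqrt_pos.mpr (by positivity)
  have h1 : Tendsto (fun n : ℕ => (∫ u in Set.Ioi (0:ℝ), Fop n u) / Real.sqrt (π/2))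
      atTop (𝓝 1) := by
    have := int_tendsto.div_const (Real.sqrt (π/2))
    rwa [div_self hpi.ne'] at this
  apply h1.congr'
  filter_upwards [eventually_ge_atTop 1] with n hn
  have hn0 : (0:ℝ) < (n:ℝ) := by exact_mod_cast hn
  have hsn : (0:ℝ) < Real.sqrt n := Real.sqrt_pos.mpr hn0
  have hc : (0:ℝ) < (n:ℝ)^n / Real.exp n := by positivity
  rw [sub_eq n hn]
  have hsplit : Real.sqrt (π * n / 2) = Real.sqrt n * Real.sqrt (π/2) := by
    rw [show π*(n:ℝ)/2 = (n:ℝ)*(π/2) by ring, Real.sqrt_mul (Nat.cast_nonneg n)]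
  rw [hsplit,
    show ((n:ℝ)^n / Real.exp n) * (Real.sqrt n * ∫ u in Set.Ioi (0:ℝ), Fop n u)
      = (((n:ℝ)^n / Real.exp n) * Real.sqrt n) * ∫ u in Set.Ioi (0:ℝ), Fop n u by ring,
    show ((n:ℝ)^n / Real.exp n) * (Real.sqrt n * Real.sqrt (π/2))
      = (((n:ℝ)^n / Real.exp n) * Real.sqrt n) * Real.sqrt (π/2) by ring,
    mul_div_mul_left _ _ (by positivity : ((n:ℝ)^n / Real.exp n) * Real.sqrt n ≠ 0)]
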